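/- For real symmetric positive semidefinite d×d matrices C_S and C_T with eigendecompositions C_S = U_S Σ_S U_Sᵀ and C_T = U_T Σ_T U_Tᵀ, and r = min(rank C_S, rank C_T), the minimum of ‖AᵀC_S A − C_T‖_F² over all real d×d matrices A equals Σ_{k>r} λ_k(C_T)², the sum of squares of the eigenvalues of C_T beyond the r largest. -/

import Mathlib

open Matrix Finset

lemma frobSq_eq_trace {d : ℕ} (W : Matrix (Fin d) (Fin d) ℝ) :
    ∑ i, ∑ j, (W i j) ^ 2 = Matrix.trace (W.transpose * W) := by
  simp [Matrix.trace, Matrix.mul_apply, Matrix.diag, sq]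
  rw [Finset.sum_comm]

lemma frobSq_conj {d : ℕ} (U Z : Matrix (Fin d) (Fin d) ℝ)
    (hU' : U.transpose * U = 1) :
    ∑ i, ∑ j, ((U * Z * U.transpose) i j) ^ 2 = ∑ i, ∑ j, (Z i j) ^ 2 := by
  rw [frobSq_eq_trace, frobSq_eq_trace]
  have : (U * Z * U.transpose).transpose * (U * Z * U.transpose)
      = U * (Z.transpose * Z) * U.transpose := by
    simp only [Matrix.transpose_mul, Matrix.transpose_transpose, Matrix.mul_assoc]
    rw [← Matrix.mul_assoc U.transpose U, hU', Matrix.one_mul]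
  rw [this, Matrix.trace_mul_comm, ← Matrix.mul_assoc, hU', Matrix.one_mul]

lemma frobSq_proj_le {d : ℕ} (Y P : Matrix (Fin d) (Fin d) ℝ)
    (hPs : P.transpose = P) (hPi : P * P = P) :
    ∑ i, ∑ j, ((Y * P) i j) ^ 2 ≤ ∑ i, ∑ j, (Y i j) ^ 2 := by
  have cyc : ∀ Q : Matrix (Fin d) (Fin d) ℝ,
      Matrix.trace (P * Q * P) = Matrix.trace (Q * P) := fun Q => by
    rw [Matrix.trace_mul_comm (P * Q) P, ← Matrix.mul_assoc, hPi, Matrix.trace_mul_comm]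
  have e1 : (Y * P).transpose * (Y * P) = P * (Y.transpose * Y) * P := by
    rw [Matrix.transpose_mul, hPs]; simp only [Matrix.mul_assoc]
  have h1 : Matrix.trace ((Y * P).transpose * (Y * P)) = Matrix.trace (Y.transpose * Y * P) := by
    rw [e1, cyc]
  have key : ∑ i, ∑ j, (Y i j)^2
      = (∑ i, ∑ j, ((Y * P) i j)^2) + ∑ i, ∑ j, ((Y - Y * P) i j)^2 := by
    rw [frobSq_eq_trace, frobSq_eq_trace, frobSq_eq_trace, h1]
    have h2 : (Y - Y * P).transpose * (Y - Y * P)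
        = Y.transpose * Y - Y.transpose * Y * P
          - (P * (Y.transpose * Y) - P * (Y.transpose * Y) * P) := by
      rw [Matrix.transpose_sub, Matrix.transpose_mul, hPs, Matrix.sub_mul, Matrix.mul_sub,
        Matrix.mul_sub]
      simp only [Matrix.mul_assoc]
    rw [h2]
    simp only [Matrix.trace_sub]
    rw [Matrix.trace_mul_comm P (Y.transpose * Y), cyc]
    ring
  have hnn : 0 ≤ ∑ i, ∑ j, ((Y - Y * P) i j)^2 :=
    Finset.sum_nonneg fun i _ => Finset.sum_nonneg fun j _ => sq_nonneg _
  linarith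

lemma card_filter_ge {d r : ℕ} :
    (Finset.univ.filter (fun k : Fin d => r ≤ (k : ℕ))).card = d - r := by
  have h2 : (Finset.univ.filter (fun k : Fin d => r ≤ (k : ℕ))).card
      = ((Finset.range d).filter (fun i => r ≤ i)).card := by
    apply Finset.card_bij (fun (k : Fin d) _ => (k : ℕ))
    · intro a ha
      simp only [Finset.mem_filter, Finset.mem_univ, true_and] at ha
      simp [Finset.mem_filter, Finset.mem_range, a.isLt, ha]
    · intro a _ b _ hab; exact Fin.val_injective hab
    · intro b hb
      simp only [Finset.mem_filter, Finset.mem_range] at hb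
      exact ⟨⟨b, hb.1⟩, by simp [hb.2], rfl⟩
  rw [h2]
  have h3 : (Finset.range d).filter (fun i => r ≤ i) = Finset.Ico r d := by
    ext i
    simp only [Finset.mem_filter, Finset.mem_range, Finset.mem_Ico]
    omega
  rw [h3, Nat.card_Ico]

lemma scalar_min {d r : ℕ} (c q : Fin d → ℝ) (hc0 : ∀ k, 0 ≤ c k)
    (hanti : ∀ i j : Fin d, i ≤ j → c j ≤ c i)
    (hq0 : ∀ k, 0 ≤ q k) (hq1 : ∀ k, q k ≤ 1)
    (hqs : (d : ℝ) - r ≤ ∑ k, q k) :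
    ∑ k ∈ Finset.univ.filter (fun k : Fin d => r ≤ (k : ℕ)), c k ≤ ∑ k, c k * q k := by
  by_cases hrd : r < d
  · set p : Fin d → Prop := fun k => r ≤ (k : ℕ) with hp
    set θ := c ⟨r, hrd⟩ with hθ
    have hθ0 : 0 ≤ θ := hc0 _
    have hsplit : ∑ k ∈ Finset.univ.filter p, (c k * q k)
        + ∑ k ∈ Finset.univ.filter (fun k => ¬ p k), (c k * q k) = ∑ k, c k * q k :=
      Finset.sum_filter_add_sum_filter_not _ _ _
    have hsplitq : ∑ k ∈ Finset.univ.filter p, q k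
        + ∑ k ∈ Finset.univ.filter (fun k => ¬ p k), q k = ∑ k, q k :=
      Finset.sum_filter_add_sum_filter_not _ _ _
    have hcard : ((Finset.univ.filter p).card : ℝ) = (d : ℝ) - r := by
      have h := @card_filter_ge d r
      have h' : (Finset.univ.filter p).card = d - r := h
      rw [h', Nat.cast_sub hrd.le]
    have hA : ∑ k ∈ Finset.univ.filter p, (c k + θ * (q k - 1))
        ≤ ∑ k ∈ Finset.univ.filter p, (c k * q k) := by
      apply Finset.sum_le_sum
      intro k hk
      have hk' : r ≤ (k : ℕ) := (Finset.mem_filter.mp hk).2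
      have hcθ : c k ≤ θ := hanti ⟨r, hrd⟩ k (by simpa [Fin.le_def] using hk')
      nlinarith [hq1 k, hq0 k]
    have hB : ∑ k ∈ Finset.univ.filter (fun k => ¬ p k), (θ * q k)
        ≤ ∑ k ∈ Finset.univ.filter (fun k => ¬ p k), (c k * q k) := by
      apply Finset.sum_le_sum
      intro k hk
      have hk' : ¬ r ≤ (k : ℕ) := (Finset.mem_filter.mp hk).2
      have hcθ : θ ≤ c k := hanti k ⟨r, hrd⟩ (by simp [Fin.le_def]; omega)
      exact mul_le_mul_of_nonneg_right hcθ (hq0 k)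
    have key : ∑ k ∈ Finset.univ.filter p, (c k + θ * (q k - 1))
        + ∑ k ∈ Finset.univ.filter (fun k => ¬ p k), (θ * q k)
        = ∑ k ∈ Finset.univ.filter p, c k + θ * (∑ k, q k - ((d : ℝ) - r)) := by
      rw [Finset.sum_add_distrib]
      have e1 : ∑ k ∈ Finset.univ.filter p, (θ * (q k - 1))
          = θ * (∑ k ∈ Finset.univ.filter p, q k - ((Finset.univ.filter p).card : ℝ)) := by
        rw [← Finset.mul_sum, Finset.sum_sub_distrib, Finset.sum_const, nsmul_eq_mul, mul_one]
      have e2 : ∑ k ∈ Finset.univ.filter (fun k => ¬ p k), (θ * q k)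
          = θ * ∑ k ∈ Finset.univ.filter (fun k => ¬ p k), q k := by
        rw [← Finset.mul_sum]
      rw [e1, e2, hcard]
      linear_combination θ * hsplitq
    have : ∑ k ∈ Finset.univ.filter p, c k
        ≤ ∑ k ∈ Finset.univ.filter p, c k + θ * (∑ k, q k - ((d : ℝ) - r)) := by
      have : 0 ≤ θ * (∑ k, q k - ((d : ℝ) - r)) := mul_nonneg hθ0 (by linarith)
      linarith
    calc ∑ k ∈ Finset.univ.filter p, c k
        ≤ ∑ k ∈ Finset.univ.filter p, c k + θ * (∑ k, q k - ((d : ℝ) - r)) := this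
      _ = ∑ k ∈ Finset.univ.filter p, (c k + θ * (q k - 1))
          + ∑ k ∈ Finset.univ.filter (fun k => ¬ p k), (θ * q k) := key.symm
      _ ≤ ∑ k ∈ Finset.univ.filter p, (c k * q k)
          + ∑ k ∈ Finset.univ.filter (fun k => ¬ p k), (c k * q k) := add_le_add hA hB
      _ = ∑ k, c k * q k := hsplit
  · have hempty : Finset.univ.filter (fun k : Fin d => r ≤ (k : ℕ)) = ∅ := by
      apply Finset.filter_false_of_mem
      intro k _
      have := k.isLt
      omega
    rw [hempty, Finset.sum_empty]
    exact Finset.sum_nonneg fun k _ => mul_nonneg (hc0 k) (hq0 k)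

lemma exists_proj {d : ℕ} (X : Matrix (Fin d) (Fin d) ℝ) :
    ∃ P : Matrix (Fin d) (Fin d) ℝ, P.transpose = P ∧ P * P = P ∧ X * P = 0 ∧
      (d : ℝ) - X.rank ≤ ∑ k, P k k := by
  classical
  set L := (WithLp.linearEquiv 2 ℝ (Fin d → ℝ)) with hL
  set f := X.mulVecLin ∘ₗ (L : EuclideanSpace ℝ (Fin d) →ₗ[ℝ] (Fin d → ℝ)) with hf
  set K := LinearMap.ker f with hK
  set m := Module.finrank ℝ K with hm
  let b := stdOrthonormalBasis ℝ K
  set v : Fin m → EuclideanSpace ℝ (Fin d) := fun i => (b i : EuclideanSpace ℝ (Fin d)) with hv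
  have hortho : Orthonormal ℝ v := b.orthonormal.comp_linearIsometry K.subtypeₗᵢ
  have hinner : ∀ i j, (∑ k, v i k * v j k) = if i = j then (1 : ℝ) else 0 := by
    intro i j
    have h := orthonormal_iff_ite.mp hortho i j
    rw [PiLp.inner_apply] at h
    rw [Finset.sum_congr rfl fun k _ => mul_comm (v i k) (v j k)]
    simpa [RCLike.inner_apply, conj_trivial] using h
  have hker : ∀ i, X.mulVec (fun k => v i k) = 0 := by
    intro i
    have h0 : f (v i) = 0 := LinearMap.mem_ker.mp (b i).2
    exact h0
  refine ⟨Matrix.of fun k l => ∑ i, v i k * v i l, ?_, ?_, ?_, ?_⟩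
  · ext k l
    simp only [Matrix.transpose_apply, Matrix.of_apply]
    exact Finset.sum_congr rfl fun i _ => mul_comm _ _
  · ext k l
    simp only [Matrix.mul_apply, Matrix.of_apply]
    calc ∑ j, (∑ i, v i k * v i j) * ∑ i', v i' j * v i' l
        = ∑ j, ∑ i, ∑ i', (v i k * v i' l) * (v i j * v i' j) := by
          refine Finset.sum_congr rfl fun j _ => ?_
          rw [Finset.sum_mul_sum]
          exact Finset.sum_congr rfl fun i _ => Finset.sum_congr rfl fun i' _ => by ring
      _ = ∑ i, ∑ j, ∑ i', (v i k * v i' l) * (v i j * v i' j) := Finset.sum_comm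
      _ = ∑ i, ∑ i', ∑ j, (v i k * v i' l) * (v i j * v i' j) :=
          Finset.sum_congr rfl fun i _ => Finset.sum_comm
      _ = ∑ i, ∑ i', (v i k * v i' l) * ∑ j, v i j * v i' j :=
          Finset.sum_congr rfl fun i _ => Finset.sum_congr rfl fun i' _ =>
            (Finset.mul_sum _ _ _).symm
      _ = ∑ i, v i k * v i l := by
          refine Finset.sum_congr rfl fun i _ => ?_
          rw [Finset.sum_eq_single i]
          · rw [hinner]; simp
          · intro i' _ hne
            rw [hinner]
            simp [(Ne.symm hne)]
          · simp
  · ext a l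
    simp only [Matrix.mul_apply, Matrix.of_apply, Matrix.zero_apply]
    calc ∑ k, X a k * ∑ i, v i k * v i l
        = ∑ k, ∑ i, (X a k * v i k) * v i l := by
          refine Finset.sum_congr rfl fun k _ => ?_
          rw [Finset.mul_sum]
          exact Finset.sum_congr rfl fun i _ => by ring
      _ = ∑ i, ∑ k, (X a k * v i k) * v i l := Finset.sum_comm
      _ = ∑ i, (∑ k, X a k * v i k) * v i l :=
          Finset.sum_congr rfl fun i _ => (Finset.sum_mul _ _ _).symm
      _ = 0 := by
          refine Finset.sum_eq_zero fun i _ => ?_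
          have := congrFun (hker i) a
          simp only [Matrix.mulVec, dotProduct, Pi.zero_apply] at this
          rw [this, zero_mul]
  · have hsum : ∑ k, (Matrix.of fun k l => ∑ i, v i k * v i l) k k = (m : ℝ) := by
      simp only [Matrix.of_apply]
      rw [Finset.sum_comm]
      have : ∀ i, (∑ k, v i k * v i k) = (1 : ℝ) := fun i => by
        rw [hinner]; simp
      simp [this]
    rw [hsum]
    have hrange : Module.finrank ℝ (LinearMap.range f) = X.rank := by
      rw [hf, LinearMap.range_comp_of_range_eq_top _ (LinearEquiv.range L)]
      rfl
    have hrn : Module.finrank ℝ (LinearMap.range f) + Module.finrank ℝ K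
        = Module.finrank ℝ (EuclideanSpace ℝ (Fin d)) :=
      LinearMap.finrank_range_add_finrank_ker f
    have hd : Module.finrank ℝ (EuclideanSpace ℝ (Fin d)) = d := by
      simp [finrank_euclideanSpace]
    rw [hrange, hd] at hrn
    have : (X.rank : ℝ) + (m : ℝ) = (d : ℝ) := by exact_mod_cast congrArg (Nat.cast (R := ℝ)) hrn
    linarith

lemma construct_B {d : ℕ} (sS t : Fin d → ℝ) (hsS : ∀ i, 0 ≤ sS i) (ht : ∀ i, 0 ≤ t i)
    (r : ℕ) (hrS : r ≤ (Finset.univ.filter (fun i : Fin d => sS i ≠ 0)).card) :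
    ∃ B : Matrix (Fin d) (Fin d) ℝ, B.transpose * Matrix.diagonal sS * B
      = Matrix.diagonal (fun k : Fin d => if (k : ℕ) < r then t k else 0) := by
  classical
  set S := Finset.univ.filter (fun i : Fin d => sS i ≠ 0) with hS
  set f : Fin S.card → Fin d := fun j => ((S.orderIsoOfFin rfl j : S) : Fin d) with hfdef
  have hfinj : Function.Injective f := fun a b hab => by
    have := Subtype.coe_injective hab
    exact (S.orderIsoOfFin rfl).injective this
  have hfS : ∀ j, sS (f j) ≠ 0 := fun j => by
    have hmem : (f j) ∈ S := (S.orderIsoOfFin rfl j).2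
    rw [hS, Finset.mem_filter] at hmem
    exact hmem.2
  set B : Matrix (Fin d) (Fin d) ℝ := Matrix.of fun i k =>
    if h : (k : ℕ) < r then
      (if i = f ⟨(k : ℕ), lt_of_lt_of_le h hrS⟩ then Real.sqrt (t k) / Real.sqrt (sS i) else 0)
    else 0 with hB
  refine ⟨B, ?_⟩
  have expand : ∀ k l, (B.transpose * Matrix.diagonal sS * B) k l
      = ∑ i, B i k * (sS i * B i l) := by
    intro k l
    rw [Matrix.mul_assoc, Matrix.mul_apply]
    refine Finset.sum_congr rfl fun i _ => ?_
    rw [Matrix.transpose_apply, Matrix.diagonal_mul]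
  ext k l
  rw [expand]
  rcases eq_or_ne k l with rfl | hkl
  · rw [Matrix.diagonal_apply_eq]
    by_cases hkr : (k : ℕ) < r
    · set i₀ := f ⟨(k : ℕ), lt_of_lt_of_le hkr hrS⟩ with hi₀
      rw [Finset.sum_eq_single i₀]
      · have hb : sS i₀ ≠ 0 := hfS _
        have hs2 : Real.sqrt (sS i₀) * Real.sqrt (sS i₀) = sS i₀ := Real.mul_self_sqrt (hsS i₀)
        have ht2 : Real.sqrt (t k) * Real.sqrt (t k) = t k := Real.mul_self_sqrt (ht k)
        simp only [hB, Matrix.of_apply, dif_pos hkr, if_pos rfl, if_pos hkr]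
        simp only [if_pos (show i₀ = f ⟨(k : ℕ), lt_of_lt_of_le hkr hrS⟩ from rfl)]
        calc (Real.sqrt (t k) / Real.sqrt (sS i₀))
              * (sS i₀ * (Real.sqrt (t k) / Real.sqrt (sS i₀)))
            = (Real.sqrt (t k) * Real.sqrt (t k))
              * (sS i₀ / (Real.sqrt (sS i₀) * Real.sqrt (sS i₀))) := by ring
          _ = t k := by rw [hs2, ht2, div_self hb, mul_one]
      · intro i _ hne
        simp only [hB, Matrix.of_apply, dif_pos hkr, if_neg (by exact hne), if_neg hne]
        simp only [if_neg (show ¬ i = f ⟨(k : ℕ), lt_of_lt_of_le hkr hrS⟩ from hne)]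
        ring
      · simp
    · rw [if_neg hkr]
      refine Finset.sum_eq_zero fun i _ => ?_
      simp [hB, dif_neg hkr]
  · rw [Matrix.diagonal_apply_ne _ hkl]
    refine Finset.sum_eq_zero fun i _ => ?_
    by_cases hkr : (k : ℕ) < r
    · by_cases hlr : (l : ℕ) < r
      · by_cases hik : i = f ⟨(k : ℕ), lt_of_lt_of_le hkr hrS⟩
        · have hil : i ≠ f ⟨(l : ℕ), lt_of_lt_of_le hlr hrS⟩ := by
            intro hil
            apply hkl
            have h1 := hfinj (hik.symm.trans hil)
            have h2 : (k : ℕ) = (l : ℕ) := by simpa using congrArg Fin.val h1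
            exact Fin.ext h2
          simp [hB, dif_pos hkr, dif_pos hlr, if_neg hil]
        · simp [hB, dif_pos hkr, dif_pos hlr, if_neg hik]
      · simp [hB, dif_neg hlr]
    · simp [hB, dif_neg hkr]

lemma frobSq_diagonal {d : ℕ} (w : Fin d → ℝ) :
    ∑ i, ∑ j, ((Matrix.diagonal w) i j) ^ 2 = ∑ k, w k ^ 2 := by
  refine Finset.sum_congr rfl fun i _ => ?_
  rw [Finset.sum_eq_single i]
  · rw [Matrix.diagonal_apply_eq]
  · intro j _ hne
    rw [Matrix.diagonal_apply_ne _ (Ne.symm hne)]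
    ring
  · simp

theorem coral_min_value {d : ℕ}
    (CS CT US UT : Matrix (Fin d) (Fin d) ℝ) (sS t : Fin d → ℝ)
    (hUS : US * US.transpose = 1) (hUS' : US.transpose * US = 1)
    (hUT : UT * UT.transpose = 1) (hUT' : UT.transpose * UT = 1)
    (hsS : ∀ i, 0 ≤ sS i) (ht : ∀ i, 0 ≤ t i)
    (htanti : ∀ i j : Fin d, i ≤ j → t j ≤ t i)
    (hCS : CS = US * Matrix.diagonal sS * US.transpose)
    (hCT : CT = UT * Matrix.diagonal t * UT.transpose)
    (r : ℕ) (hr : r = min CS.rank CT.rank) :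
    IsLeast
      (Set.range fun A : Matrix (Fin d) (Fin d) ℝ =>
        ∑ i, ∑ j, ((A.transpose * CS * A - CT) i j) ^ 2)
      (∑ k ∈ Finset.univ.filter (fun k : Fin d => r ≤ (k : ℕ)), (t k) ^ 2) := by
  classical
  -- rank facts
  have hCSrank : CS.rank ≤ (Finset.univ.filter (fun i : Fin d => sS i ≠ 0)).card := by
    have h1 : CS.rank ≤ (Matrix.diagonal sS).rank := by
      rw [hCS]
      exact le_trans (Matrix.rank_mul_le_left _ _)
        (Matrix.rank_mul_le_right _ _)
    have h2 : (Matrix.diagonal sS).rank = Fintype.card {i // sS i ≠ 0} :=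
      Matrix.rank_diagonal sS
    rw [h2, Fintype.card_subtype] at h1
    exact h1
  have hDT : Matrix.diagonal t = UT.transpose * CT * UT := by
    rw [hCT]
    simp only [Matrix.mul_assoc]
    rw [hUT', Matrix.mul_one, ← Matrix.mul_assoc UT.transpose UT, hUT', Matrix.one_mul]
  have hcardT : (Finset.univ.filter (fun i : Fin d => t i ≠ 0)).card ≤ CT.rank := by
    have h1 : (Matrix.diagonal t).rank ≤ CT.rank := by
      rw [hDT]
      exact le_trans (Matrix.rank_mul_le_left _ _)
        (Matrix.rank_mul_le_right _ _)
    have h2 : (Matrix.diagonal t).rank = Fintype.card {i // t i ≠ 0} :=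
      Matrix.rank_diagonal t
    rw [h2, Fintype.card_subtype] at h1
    exact h1
  have htail : ∀ k : Fin d, CT.rank ≤ (k : ℕ) → t k = 0 := by
    intro k hk
    by_contra htk
    have hpos : ∀ j, j ≤ k → t j ≠ 0 := fun j hj =>
      ne_of_gt (lt_of_lt_of_le (lt_of_le_of_ne (ht k) (Ne.symm htk)) (htanti j k hj))
    have hsub : Finset.Iic k ⊆ Finset.univ.filter (fun i : Fin d => t i ≠ 0) := by
      intro j hj
      exact Finset.mem_filter.mpr ⟨Finset.mem_univ _, hpos j (Finset.mem_Iic.mp hj)⟩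
    have hcard : (k : ℕ) + 1 ≤ (Finset.univ.filter (fun i : Fin d => t i ≠ 0)).card := by
      have := Finset.card_le_card hsub
      rwa [Fin.card_Iic] at this
    omega
  constructor
  · -- membership: the minimum is attained
    have hrS : r ≤ (Finset.univ.filter (fun i : Fin d => sS i ≠ 0)).card := by
      rw [hr]; exact le_trans (min_le_left _ _) hCSrank
    obtain ⟨B, hB⟩ := construct_B sS t hsS ht r hrS
    refine ⟨US * B * UT.transpose, ?_⟩
    have hA : (US * B * UT.transpose).transpose * CS * (US * B * UT.transpose)
        = UT * (B.transpose * Matrix.diagonal sS * B) * UT.transpose := by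
      rw [hCS]
      simp only [Matrix.transpose_mul, Matrix.transpose_transpose, Matrix.mul_assoc]
      rw [← Matrix.mul_assoc US.transpose US, hUS', Matrix.one_mul,
        ← Matrix.mul_assoc US.transpose US, hUS', Matrix.one_mul]
    show ∑ i, ∑ j, (((US * B * UT.transpose).transpose * CS * (US * B * UT.transpose) - CT) i j) ^ 2
      = ∑ k ∈ Finset.univ.filter (fun k : Fin d => r ≤ (k : ℕ)), (t k) ^ 2
    have hdiff : (US * B * UT.transpose).transpose * CS * (US * B * UT.transpose) - CT
        = UT * (Matrix.diagonal (fun k : Fin d => if (k : ℕ) < r then t k else 0)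
            - Matrix.diagonal t) * UT.transpose := by
      rw [hA, hB, hCT, Matrix.mul_sub, Matrix.sub_mul]
    rw [hdiff, frobSq_conj UT _ hUT']
    rw [Matrix.diagonal_sub, frobSq_diagonal]
    have hterm : ∀ k : Fin d,
        ((if (k : ℕ) < r then t k else 0) - t k) ^ 2
          = if r ≤ (k : ℕ) then t k ^ 2 else 0 := by
      intro k
      by_cases h : (k : ℕ) < r
      · rw [if_pos h, if_neg (by omega)]; ring
      · rw [if_neg h, if_pos (by omega)]; ring
    rw [Finset.sum_congr rfl (fun k _ => hterm k), ← Finset.sum_filter]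
  · -- lower bound
    rintro x ⟨A, rfl⟩
    set X := UT.transpose * (A.transpose * CS * A) * UT with hX
    have hM : A.transpose * CS * A - CT = UT * (X - Matrix.diagonal t) * UT.transpose := by
      have h1 : UT * X * UT.transpose = A.transpose * CS * A := by
        rw [hX]
        simp only [Matrix.mul_assoc]
        rw [hUT, Matrix.mul_one, ← Matrix.mul_assoc UT UT.transpose, hUT, Matrix.one_mul]
      rw [Matrix.mul_sub, Matrix.sub_mul, h1, ← hCT]
    show (∑ k ∈ Finset.univ.filter (fun k : Fin d => r ≤ (k : ℕ)), (t k) ^ 2)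
      ≤ ∑ i, ∑ j, ((A.transpose * CS * A - CT) i j) ^ 2
    rw [hM, frobSq_conj UT _ hUT']
    rcases le_total CS.rank CT.rank with hcase | hcase
    · -- r = CS.rank
      have hrr : r = CS.rank := by rw [hr, min_eq_left hcase]
      have hXr : X.rank ≤ r := by
        rw [hrr, hX]
        calc (UT.transpose * (A.transpose * CS * A) * UT).rank
            ≤ (UT.transpose * (A.transpose * CS * A)).rank := Matrix.rank_mul_le_left _ _
          _ ≤ (A.transpose * CS * A).rank := Matrix.rank_mul_le_right _ _
          _ ≤ (A.transpose * CS).rank := Matrix.rank_mul_le_left _ _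
          _ ≤ CS.rank := Matrix.rank_mul_le_right _ _
      obtain ⟨P, hPs, hPi, hXP, htr⟩ := exists_proj X
      have hdiag : ∀ k, P k k = ∑ j, (P k j) ^ 2 := by
        intro k
        conv_lhs => rw [← hPi]
        rw [Matrix.mul_apply]
        refine Finset.sum_congr rfl fun j _ => ?_
        have hsym : P j k = P k j := congrFun (congrFun hPs k) j
        rw [hsym]; ring
      have hq0 : ∀ k, 0 ≤ P k k := fun k => by
        rw [hdiag k]; exact Finset.sum_nonneg fun j _ => sq_nonneg _
      have hq1 : ∀ k, P k k ≤ 1 := by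
        intro k
        have h1 : (P k k) ^ 2 ≤ ∑ j, (P k j) ^ 2 :=
          Finset.single_le_sum (f := fun j => (P k j) ^ 2) (fun j _ => sq_nonneg _)
            (Finset.mem_univ k)
        rw [← hdiag k] at h1
        nlinarith [hq0 k]
      have hqs : (d : ℝ) - r ≤ ∑ k, P k k := by
        have : (X.rank : ℝ) ≤ (r : ℝ) := by exact_mod_cast hXr
        linarith
      have hscalar := scalar_min (fun k => t k ^ 2) (fun k => P k k)
        (fun k => sq_nonneg _)
        (fun i j hij => pow_le_pow_left₀ (ht j) (htanti i j hij) 2)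
        hq0 hq1 hqs
      have hDP : ∑ k, t k ^ 2 * P k k
          = ∑ i, ∑ j, ((Matrix.diagonal t * P) i j) ^ 2 := by
        refine Finset.sum_congr rfl fun k _ => ?_
        rw [hdiag k, Finset.mul_sum]
        refine Finset.sum_congr rfl fun j _ => ?_
        rw [Matrix.diagonal_mul]
        ring
      have hneg : (X - Matrix.diagonal t) * P = -(Matrix.diagonal t * P) := by
        rw [Matrix.sub_mul, hXP, zero_sub]
      have hfinal : ∑ k, t k ^ 2 * P k k
          ≤ ∑ i, ∑ j, ((X - Matrix.diagonal t) i j) ^ 2 := by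
        rw [hDP]
        calc ∑ i, ∑ j, ((Matrix.diagonal t * P) i j) ^ 2
            = ∑ i, ∑ j, (((X - Matrix.diagonal t) * P) i j) ^ 2 := by
              rw [hneg]
              refine Finset.sum_congr rfl fun i _ => Finset.sum_congr rfl fun j _ => ?_
              simp only [Matrix.neg_apply]
              ring
          _ ≤ ∑ i, ∑ j, ((X - Matrix.diagonal t) i j) ^ 2 :=
              frobSq_proj_le _ P hPs hPi
      exact le_trans hscalar hfinal
    · -- r = CT.rank : target sum is zero
      have hrr : r = CT.rank := by rw [hr, min_eq_right hcase]
      have hzero : ∑ k ∈ Finset.univ.filter (fun k : Fin d => r ≤ (k : ℕ)), (t k) ^ 2 = 0 := by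
        refine Finset.sum_eq_zero fun k hk => ?_
        have hk' : r ≤ (k : ℕ) := (Finset.mem_filter.mp hk).2
        rw [htail k (hrr ▸ hk')]
        ring
      rw [hzero]
      exact Finset.sum_nonneg fun i _ => Finset.sum_nonneg fun j _ => sq_nonneg _
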